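/- Let ρ ∈ (0,1), let M > 0, let (α_t)_{t≥1} be a positive nonincreasing sequence of real numbers, and let (b_t)_{t≥1} be a sequence of real numbers with 0 ≤ b_t ≤ 4M² for all t. Then for every T ≥ 1, Σ_{t=1}^{T} ρ^{T−t} (b_t − b_{t+1}) / (2α_t) ≤ 2M² / α_T. -/

import Mathlib

/-- the telescoping estimate (39). Let `ρ ∈ (0,1)`, `M > 0`,
`(α_t)` positive and nonincreasing, and `0 ≤ b_t ≤ 4M²` for all `t`. Then for every
`T ≥ 1`, `∑_{t=1}^{T} ρ^{T-t} (b_t - b_{t+1}) / (2α_t) ≤ 2M²/α_T`. -/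
theorem stmt_9 (ρ M : ℝ) (hρ0 : 0 < ρ) (hρ1 : ρ < 1) (hM : 0 < M)
    (α b : ℕ → ℝ)
    (hαpos : ∀ t, 0 < α t) (hαmono : ∀ t, α (t + 1) ≤ α t)
    (hb0 : ∀ t, 0 ≤ b t) (hb4 : ∀ t, b t ≤ 4 * M ^ 2)
    (T : ℕ) (hT : 1 ≤ T) :
    ∑ t ∈ Finset.Icc 1 T, ρ ^ (T - t) * ((b t - b (t + 1)) / (2 * α t))
      ≤ 2 * M ^ 2 / α T := by
  have key : ∀ n, 1 ≤ n →
      ∑ t ∈ Finset.Icc 1 n, ρ ^ (n - t) * ((b t - b (t + 1)) / (2 * α t))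
        ≤ (4 * M ^ 2 - b (n + 1)) / (2 * α n) := by
    intro n hn
    induction n, hn using Nat.le_induction with
    | base =>
      simp only [Finset.Icc_self, Finset.sum_singleton, Nat.sub_self, pow_zero, one_mul]
      have h1 : (0:ℝ) ≤ 2 * α 1 := by linarith [hαpos 1]
      exact div_le_div_of_nonneg_right (by linarith [hb4 1]) h1
    | succ n hn ih =>
      rw [Finset.sum_Icc_succ_top (by omega : 1 ≤ n + 1)]
      have hshift : ∑ t ∈ Finset.Icc 1 n, ρ ^ (n + 1 - t) * ((b t - b (t + 1)) / (2 * α t))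
          = ρ * ∑ t ∈ Finset.Icc 1 n, ρ ^ (n - t) * ((b t - b (t + 1)) / (2 * α t)) := by
        rw [Finset.mul_sum]
        refine Finset.sum_congr rfl fun t ht => ?_
        have ht' : t ≤ n := (Finset.mem_Icc.mp ht).2
        have : n + 1 - t = (n - t) + 1 := by omega
        rw [this, pow_succ]; ring
      rw [hshift]
      simp only [Nat.sub_self, pow_zero, one_mul]
      have hXnn : (0:ℝ) ≤ 4 * M ^ 2 - b (n + 1) := by linarith [hb4 (n + 1)]
      have hαn : (0:ℝ) < α n := hαpos n
      have hαn1 : (0:ℝ) < α (n + 1) := hαpos (n + 1)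
      have h1 : ρ * ∑ t ∈ Finset.Icc 1 n, ρ ^ (n - t) * ((b t - b (t + 1)) / (2 * α t))
          ≤ ρ * ((4 * M ^ 2 - b (n + 1)) / (2 * α n)) :=
        mul_le_mul_of_nonneg_left ih hρ0.le
      have h2 : ρ * ((4 * M ^ 2 - b (n + 1)) / (2 * α n))
          ≤ (4 * M ^ 2 - b (n + 1)) / (2 * α (n + 1)) := by
        calc ρ * ((4 * M ^ 2 - b (n + 1)) / (2 * α n))
            ≤ 1 * ((4 * M ^ 2 - b (n + 1)) / (2 * α n)) := by
              apply mul_le_mul_of_nonneg_right hρ1.le (by positivity)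
          _ = (4 * M ^ 2 - b (n + 1)) / (2 * α n) := one_mul _
          _ ≤ (4 * M ^ 2 - b (n + 1)) / (2 * α (n + 1)) := by
              gcongr
              exact hαmono n
      have h3 : (4 * M ^ 2 - b (n + 1)) / (2 * α (n + 1))
            + (b (n + 1) - b (n + 1 + 1)) / (2 * α (n + 1))
          = (4 * M ^ 2 - b (n + 1 + 1)) / (2 * α (n + 1)) := by
        rw [← add_div]; ring_nf
      linarith [h1, h2]
  have := key T hT
  have hαT : (0:ℝ) < α T := hαpos T
  have : (4 * M ^ 2 - b (T + 1)) / (2 * α T) ≤ 2 * M ^ 2 / α T := by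
    rw [div_le_div_iff₀ (by positivity) hαT]
    nlinarith [hb0 (T + 1)]
  linarith [key T hT]
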